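/- Let T > 0, let d_f, d_b be nonnegative real constants, let p : ℝ → ℝ be Lipschitz continuous with constant L, and let R₀, R₁, R₂ > 0. Let c : [0,T] → ℝ be continuous with 0 ≤ c(t) ≤ R₁, let α₁, β₁, α₂, β₂ ∈ [0, R₂], and for i = 1,2 let (r_{f,i}, r_{b,i}) be continuously differentiable solutions on [0,T] of r_{f,i}' = p(r_{b,i}) − αᵢ c r_{f,i} + βᵢ r_{b,i} − d_f r_{f,i}, r_{b,i}' = αᵢ c r_{f,i} − βᵢ r_{b,i} − d_b r_{b,i}, with the same nonnegative initial data and with 0 ≤ r_{f,i}(t), r_{b,i}(t) ≤ R₀ on [0,T]. Then there is a constant μ, depending only on d_f, d_b, L, R₀, R₁, R₂ and T, such that |r_{f,1}(t) − r_{f,2}(t)| + |r_{b,1}(t) − r_{b,2}(t)| ≤ μ (|α₁ − α₂| + |β₁ − β₂|) for all t ∈ [0,T]. -/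

import Mathlib

open Set

/-- The receptor ODE system of the signalling model on the time interval `[0, T]`:
`r_f` (free receptors) and `r_b` (bound receptors) are continuously differentiable on `[0,T]`,
satisfy the two ODEs there, and take the prescribed initial values. -/
def IsReceptorSolution (T : ℝ) (c : ℝ → ℝ) (α β d_f d_b : ℝ) (p : ℝ → ℝ)
    (rf0 rb0 : ℝ) (rf rb : ℝ → ℝ) : Prop :=
  ContDiffOn ℝ 1 rf (Icc 0 T) ∧ ContDiffOn ℝ 1 rb (Icc 0 T) ∧
  (∀ t ∈ Icc 0 T,
    HasDerivWithinAt rf (p (rb t) - α * c t * rf t + β * rb t - d_f * rf t) (Icc 0 T) t) ∧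
  (∀ t ∈ Icc 0 T,
    HasDerivWithinAt rb (α * c t * rf t - β * rb t - d_b * rb t) (Icc 0 T) t) ∧
  rf 0 = rf0 ∧ rb 0 = rb0

/-- Continuous dependence of the receptor densities on the reaction rates `α, β`:
the constant `μ` depends only on `d_f, d_b, L, R₀, R₁, R₂, T`. -/
theorem stmt_4 (T d_f d_b L R₀ R₁ R₂ : ℝ) (hT : 0 < T)
    (hdf : 0 ≤ d_f) (hdb : 0 ≤ d_b) (hL : 0 ≤ L)
    (hR₀ : 0 < R₀) (hR₁ : 0 < R₁) (hR₂ : 0 < R₂) :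
    ∃ μ : ℝ, ∀ p : ℝ → ℝ, LipschitzWith L.toNNReal p →
      ∀ c : ℝ → ℝ, ContinuousOn c (Icc 0 T) → (∀ t ∈ Icc 0 T, 0 ≤ c t ∧ c t ≤ R₁) →
        ∀ α₁ β₁ α₂ β₂ : ℝ,
          α₁ ∈ Icc 0 R₂ → β₁ ∈ Icc 0 R₂ → α₂ ∈ Icc 0 R₂ → β₂ ∈ Icc 0 R₂ →
          ∀ rf₁ rb₁ rf₂ rb₂ : ℝ → ℝ,
            IsReceptorSolution T c α₁ β₁ d_f d_b p (rf₁ 0) (rb₁ 0) rf₁ rb₁ →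
            IsReceptorSolution T c α₂ β₂ d_f d_b p (rf₂ 0) (rb₂ 0) rf₂ rb₂ →
            rf₁ 0 = rf₂ 0 → rb₁ 0 = rb₂ 0 → 0 ≤ rf₁ 0 → 0 ≤ rb₁ 0 →
            (∀ t ∈ Icc 0 T, 0 ≤ rf₁ t ∧ rf₁ t ≤ R₀) →
            (∀ t ∈ Icc 0 T, 0 ≤ rb₁ t ∧ rb₁ t ≤ R₀) →
            (∀ t ∈ Icc 0 T, 0 ≤ rf₂ t ∧ rf₂ t ≤ R₀) →
            (∀ t ∈ Icc 0 T, 0 ≤ rb₂ t ∧ rb₂ t ≤ R₀) →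
            ∀ t ∈ Icc 0 T,
              |rf₁ t - rf₂ t| + |rb₁ t - rb₂ t| ≤ μ * (|α₁ - α₂| + |β₁ - β₂|) := by
  have hA : (0:ℝ) < L + R₁ * R₂ + R₂ + d_f + d_b + 1 := by positivity
  set A : ℝ := L + R₁ * R₂ + R₂ + d_f + d_b + 1 with hAdef
  set K : ℝ := 2 * A with hKdef
  have hK : 0 < K := by positivity
  set C : ℝ := (R₁ + 1) * R₀ with hCdef
  have hC : 0 < C := by positivity
  refine ⟨2 * (C / K) * Real.exp (K * T), ?_⟩
  intro p hp c hc hcb α₁ β₁ α₂ β₂ hα₁ hβ₁ hα₂ hβ₂ rf₁ rb₁ rf₂ rb₂ hs₁ hs₂ hrf0 hrb0 _ _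
    hbf₁ hbb₁ hbf₂ hbb₂ t ht
  obtain ⟨hcf₁, hcb₁, hdf₁, hdb₁, -, -⟩ := hs₁
  obtain ⟨hcf₂, hcb₂, hdf₂, hdb₂, -, -⟩ := hs₂
  set D : ℝ := |α₁ - α₂| + |β₁ - β₂| with hDdef
  have hD : 0 ≤ D := by positivity
  set f : ℝ → ℝ × ℝ := fun s => (rf₁ s - rf₂ s, rb₁ s - rb₂ s) with hfdef
  set f' : ℝ → ℝ × ℝ := fun s =>
    ((p (rb₁ s) - α₁ * c s * rf₁ s + β₁ * rb₁ s - d_f * rf₁ s)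
      - (p (rb₂ s) - α₂ * c s * rf₂ s + β₂ * rb₂ s - d_f * rf₂ s),
     (α₁ * c s * rf₁ s - β₁ * rb₁ s - d_b * rb₁ s)
      - (α₂ * c s * rf₂ s - β₂ * rb₂ s - d_b * rb₂ s)) with hf'def
  have hfc : ContinuousOn f (Icc 0 T) :=
    (hcf₁.continuousOn.sub hcf₂.continuousOn).prodMk
      (hcb₁.continuousOn.sub hcb₂.continuousOn)
  have hfd : ∀ s ∈ Ico 0 T, HasDerivWithinAt f (f' s) (Ici s) s := by
    intro s hs
    have hs' : s ∈ Icc 0 T := Ico_subset_Icc_self hs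
    have h := HasDerivWithinAt.prodMk ((hdf₁ s hs').sub (hdf₂ s hs')) ((hdb₁ s hs').sub (hdb₂ s hs'))
    exact h.mono_of_mem_nhdsWithin (Icc_mem_nhdsGE_of_mem hs)
  have hf0 : f 0 = 0 := by
    simp only [hfdef]
    rw [hrf0, hrb0]
    simp
  have ha : ‖f 0‖ ≤ 0 := by rw [hf0, norm_zero]
  have hnf : ∀ s, ‖f s‖ = max |rf₁ s - rf₂ s| |rb₁ s - rb₂ s| := by
    intro s
    simp [hfdef, Prod.norm_def, Real.norm_eq_abs]
  have bound : ∀ s ∈ Ico 0 T, ‖f' s‖ ≤ K * ‖f s‖ + C * D := by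
    intro s hs
    have hs' : s ∈ Icc 0 T := Ico_subset_Icc_self hs
    set u : ℝ := rf₁ s - rf₂ s with hudef
    set v : ℝ := rb₁ s - rb₂ s with hvdef
    set M : ℝ := max |u| |v| with hMdef
    have hM0 : 0 ≤ M := le_trans (abs_nonneg u) (le_max_left _ _)
    have hMu : |u| ≤ M := le_max_left _ _
    have hMv : |v| ≤ M := le_max_right _ _
    have hcs : |c s| ≤ R₁ := by rw [abs_of_nonneg (hcb s hs').1]; exact (hcb s hs').2
    have hα₁b : |α₁| ≤ R₂ := by rw [abs_of_nonneg hα₁.1]; exact hα₁.2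
    have hβ₁b : |β₁| ≤ R₂ := by rw [abs_of_nonneg hβ₁.1]; exact hβ₁.2
    have hrf₂b : |rf₂ s| ≤ R₀ := by
      rw [abs_of_nonneg (hbf₂ s hs').1]; exact (hbf₂ s hs').2
    have hrb₂b : |rb₂ s| ≤ R₀ := by
      rw [abs_of_nonneg (hbb₂ s hs').1]; exact (hbb₂ s hs').2
    have hdα : (0:ℝ) ≤ |α₁ - α₂| := abs_nonneg _
    have hdβ : (0:ℝ) ≤ |β₁ - β₂| := abs_nonneg _
    -- Lipschitz bound
    have hpv : |p (rb₁ s) - p (rb₂ s)| ≤ L * |v| := by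
      have := hp.dist_le_mul (rb₁ s) (rb₂ s)
      rwa [Real.dist_eq, Real.dist_eq, Real.coe_toNNReal L hL] at this
    -- α term
    have hαterm : |α₁ * c s * rf₁ s - α₂ * c s * rf₂ s|
        ≤ R₁ * (R₂ * |u|) + R₁ * (|α₁ - α₂| * R₀) := by
      have e : α₁ * c s * rf₁ s - α₂ * c s * rf₂ s
          = c s * (α₁ * u) + c s * ((α₁ - α₂) * rf₂ s) := by
        rw [hudef]; ring
      rw [e]
      calc |c s * (α₁ * u) + c s * ((α₁ - α₂) * rf₂ s)|
          ≤ |c s * (α₁ * u)| + |c s * ((α₁ - α₂) * rf₂ s)| := abs_add_le _ _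
        _ = |c s| * (|α₁| * |u|) + |c s| * (|α₁ - α₂| * |rf₂ s|) := by
            rw [abs_mul, abs_mul, abs_mul, abs_mul]
        _ ≤ R₁ * (R₂ * |u|) + R₁ * (|α₁ - α₂| * R₀) := by
            gcongr <;> positivity
    -- β term
    have hβterm : |β₁ * rb₁ s - β₂ * rb₂ s| ≤ R₂ * |v| + |β₁ - β₂| * R₀ := by
      have e : β₁ * rb₁ s - β₂ * rb₂ s = β₁ * v + (β₁ - β₂) * rb₂ s := by
        rw [hvdef]; ring
      rw [e]
      calc |β₁ * v + (β₁ - β₂) * rb₂ s| ≤ |β₁ * v| + |(β₁ - β₂) * rb₂ s| := abs_add_le _ _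
        _ = |β₁| * |v| + |β₁ - β₂| * |rb₂ s| := by rw [abs_mul, abs_mul]
        _ ≤ R₂ * |v| + |β₁ - β₂| * R₀ := by gcongr <;> positivity
    have hSf : |d_f * u| ≤ d_f * |u| := by rw [abs_mul, abs_of_nonneg hdf]
    have hSb : |d_b * v| ≤ d_b * |v| := by rw [abs_mul, abs_of_nonneg hdb]
    obtain ⟨hP₁, hP₂⟩ := abs_le.mp hpv
    obtain ⟨hQ₁, hQ₂⟩ := abs_le.mp hαterm
    obtain ⟨hR₁', hR₂'⟩ := abs_le.mp hβterm
    obtain ⟨hS₁, hS₂⟩ := abs_le.mp hSf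
    obtain ⟨hS₃, hS₄⟩ := abs_le.mp hSb
    have m1 : L * |v| ≤ L * M := by gcongr
    have m2 : R₁ * (R₂ * |u|) ≤ R₁ * R₂ * M := by
      rw [← mul_assoc]; gcongr
    have m3 : R₂ * |v| ≤ R₂ * M := by gcongr
    have m4 : d_f * |u| ≤ d_f * M := by gcongr
    have m5 : d_b * |v| ≤ d_b * M := by gcongr
    have e₁bound : |(p (rb₁ s) - α₁ * c s * rf₁ s + β₁ * rb₁ s - d_f * rf₁ s)
        - (p (rb₂ s) - α₂ * c s * rf₂ s + β₂ * rb₂ s - d_f * rf₂ s)| ≤ K * M + C * D := by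
      have e : (p (rb₁ s) - α₁ * c s * rf₁ s + β₁ * rb₁ s - d_f * rf₁ s)
          - (p (rb₂ s) - α₂ * c s * rf₂ s + β₂ * rb₂ s - d_f * rf₂ s)
          = (p (rb₁ s) - p (rb₂ s)) - (α₁ * c s * rf₁ s - α₂ * c s * rf₂ s)
            + (β₁ * rb₁ s - β₂ * rb₂ s) - d_f * u := by
        rw [hudef]; ring
      rw [e, abs_le, hKdef, hAdef, hCdef, hDdef]
      constructor <;> linarith [mul_nonneg hL hM0, mul_nonneg (mul_nonneg hR₁.le hR₂.le) hM0,
        mul_nonneg hR₂.le hM0, mul_nonneg hdf hM0, mul_nonneg hdb hM0,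
        mul_nonneg hR₀.le hdα, mul_nonneg hR₀.le hdβ,
        mul_nonneg (mul_nonneg hR₁.le hR₀.le) hdα,
        mul_nonneg (mul_nonneg hR₁.le hR₀.le) hdβ, hM0]
    have e₂bound : |(α₁ * c s * rf₁ s - β₁ * rb₁ s - d_b * rb₁ s)
        - (α₂ * c s * rf₂ s - β₂ * rb₂ s - d_b * rb₂ s)| ≤ K * M + C * D := by
      have e : (α₁ * c s * rf₁ s - β₁ * rb₁ s - d_b * rb₁ s)
          - (α₂ * c s * rf₂ s - β₂ * rb₂ s - d_b * rb₂ s)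
          = (α₁ * c s * rf₁ s - α₂ * c s * rf₂ s) - (β₁ * rb₁ s - β₂ * rb₂ s) - d_b * v := by
        rw [hvdef]; ring
      rw [e, abs_le, hKdef, hAdef, hCdef, hDdef]
      constructor <;> linarith [mul_nonneg hL hM0, mul_nonneg (mul_nonneg hR₁.le hR₂.le) hM0,
        mul_nonneg hR₂.le hM0, mul_nonneg hdf hM0, mul_nonneg hdb hM0,
        mul_nonneg hR₀.le hdα, mul_nonneg hR₀.le hdβ,
        mul_nonneg (mul_nonneg hR₁.le hR₀.le) hdα,
        mul_nonneg (mul_nonneg hR₁.le hR₀.le) hdβ, hM0]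
    have hnf' : ‖f' s‖ = max
        |(p (rb₁ s) - α₁ * c s * rf₁ s + β₁ * rb₁ s - d_f * rf₁ s)
          - (p (rb₂ s) - α₂ * c s * rf₂ s + β₂ * rb₂ s - d_f * rf₂ s)|
        |(α₁ * c s * rf₁ s - β₁ * rb₁ s - d_b * rb₁ s)
          - (α₂ * c s * rf₂ s - β₂ * rb₂ s - d_b * rb₂ s)| := by
      simp [hf'def, Prod.norm_def, Real.norm_eq_abs]
    rw [hnf', hnf s]
    exact max_le e₁bound e₂bound
  have key := norm_le_gronwallBound_of_norm_deriv_right_le hfc hfd ha bound t ht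
  have hgb : gronwallBound 0 K (C * D) (t - 0) = C * D / K * (Real.exp (K * t) - 1) := by
    rw [gronwallBound_of_K_ne_0 hK.ne']
    simp
  rw [hgb, hnf t] at key
  have hexp : Real.exp (K * t) - 1 ≤ Real.exp (K * T) := by
    have h := Real.exp_le_exp.mpr (mul_le_mul_of_nonneg_left ht.2 hK.le)
    linarith
  have h3 : C * D / K * (Real.exp (K * t) - 1) ≤ C * D / K * Real.exp (K * T) :=
    mul_le_mul_of_nonneg_left hexp (div_nonneg (mul_nonneg hC.le hD) hK.le)
  have hu := le_trans (le_max_left |rf₁ t - rf₂ t| |rb₁ t - rb₂ t|) key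
  have hv := le_trans (le_max_right |rf₁ t - rf₂ t| |rb₁ t - rb₂ t|) key
  have hfin : 2 * (C / K) * Real.exp (K * T) * D = 2 * (C * D / K * Real.exp (K * T)) := by
    ring
  rw [hfin]
  linarith
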